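/- The game RIT is miserable: for every position x, either (i) x has Conway pair (0,1) or (1,0), or (ii) there is no move from x to a (0,1)- or (1,0)-position, or (iii) there are moves from x to both a (0,1)-position and a (1,0)-position. -/

import Mathlib

/-- The `j`-th part (0-indexed) of a partition given as a list, `0` beyond the end. -/
def part (l : List ℕ) (j : ℕ) : ℕ := l.getD j 0

/-- A partition: a nonincreasing list of positive integers. -/
def IsPartition (l : List ℕ) : Prop :=
  l.Chain' (· ≥ ·) ∧ ∀ x ∈ l, 0 < x

/-- RIT move: replace the part at (0-indexed) position `i` by a smaller value `v`,
keeping the sequence nonincreasing, then drop the (trailing) zeros. -/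
def RitMove (l l' : List ℕ) : Prop :=
  ∃ i v, i < l.length ∧ v < part l i ∧ (l.set i v).Chain' (· ≥ ·) ∧
    l' = (l.set i v).filter (fun x => x ≠ 0)

/-- RIT move on an odd-numbered row (1-indexed), i.e. an even 0-indexed position. -/
def RitMoveOdd (l l' : List ℕ) : Prop :=
  ∃ i v, i < l.length ∧ i % 2 = 0 ∧ v < part l i ∧ (l.set i v).Chain' (· ≥ ·) ∧
    l' = (l.set i v).filter (fun x => x ≠ 0)

/-- RIT move on an even-numbered row (1-indexed), i.e. an odd 0-indexed position. -/
def RitMoveEven (l l' : List ℕ) : Prop :=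
  ∃ i v, i < l.length ∧ i % 2 = 1 ∧ v < part l i ∧ (l.set i v).Chain' (· ≥ ·) ∧
    l' = (l.set i v).filter (fun x => x ≠ 0)

/-- `core λ = (λ₂, λ₂, λ₄, λ₄, …)` (1-indexed parts), as a `0`-padded sequence. -/
def core (l : List ℕ) : ℕ → ℕ := fun j => part l (2 * (j / 2) + 1)

/-- `rem λ = (λ₁ - λ₂, λ₃ - λ₄, …)` (1-indexed parts), as a `0`-padded sequence. -/
def rem (l : List ℕ) : ℕ → ℕ := fun i => part l (2 * i) - part l (2 * i + 1)

/-- A Nim move strictly decreases exactly one coordinate. -/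
def NimMove (p q : ℕ → ℕ) : Prop := ∃ i, q i < p i ∧ ∀ j, j ≠ i → q j = p j

/-- The nim-sum (bitwise XOR) of the remnant of `l`:
`(λ₁ - λ₂) ⊕ (λ₃ - λ₄) ⊕ ⋯ ⊕ (λ_{2⌈r/2⌉-1} - λ_{2⌈r/2⌉})`. -/
def nimSum (l : List ℕ) : ℕ :=
  (List.ofFn (fun i : Fin ((l.length + 1) / 2) => rem l i)).foldr (· ^^^ ·) 0

/-- The minimal excludant of a set of naturals. -/
noncomputable def mexOf (S : Set ℕ) : ℕ := sInf {n | n ∉ S}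

/-- `G` is the (normal play) Sprague-Grundy function of RIT. -/
def IsRitGrundy (G : List ℕ → ℕ) : Prop :=
  ∀ l, IsPartition l → G l = mexOf {n | ∃ l', RitMove l l' ∧ G l' = n}

/-- `G` is the misère Grundy function of RIT (value `1` at the terminal position). -/
def IsRitMisereGrundy (G : List ℕ → ℕ) : Prop :=
  G [] = 1 ∧ ∀ l, IsPartition l → l ≠ [] →
    G l = mexOf {n | ∃ l', RitMove l l' ∧ G l' = n}

/-- `G` is the misère Grundy function of Nim on `0`-padded sequences of heaps. -/
def IsNimMisereGrundy (G : (ℕ → ℕ) → ℕ) : Prop :=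
  (∀ p : ℕ → ℕ, (∀ i, p i = 0) → G p = 1) ∧
  (∀ p : ℕ → ℕ, (Function.support p).Finite → (∃ i, p i ≠ 0) →
    G p = mexOf {n | ∃ q, NimMove p q ∧ G q = n})

/-- `P` is the set of P-positions of RIT under normal play. -/
def IsRitP (P : List ℕ → Prop) : Prop :=
  ∀ l, IsPartition l → (P l ↔ ∀ l', RitMove l l' → ¬ P l')

lemma xor_left_comm (a b c : ℕ) : a ^^^ (b ^^^ c) = b ^^^ (a ^^^ c) := by
  rw [← Nat.xor_assoc, Nat.xor_comm a b, Nat.xor_assoc]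

lemma part_eq_zero {l : List ℕ} {j : ℕ} (h : l.length ≤ j) : part l j = 0 := by
  simp [part, List.getD_eq_getElem?_getD, List.getElem?_eq_none h]

lemma part_lt_length {l : List ℕ} {j : ℕ} (h : 0 < part l j) : j < l.length := by
  by_contra hc; rw [part_eq_zero (by omega)] at h; omega

lemma part_pos {l : List ℕ} (hl : IsPartition l) {j : ℕ} (h : j < l.length) :
    0 < part l j := by
  have h1 : l[j] ∈ l := List.getElem_mem _
  have h2 := hl.2 _ h1
  show 0 < l.getD j 0
  rw [List.getD_eq_getElem _ _ h]; exact h2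

lemma part_succ_le {l : List ℕ} (hl : IsPartition l) (j : ℕ) :
    part l (j + 1) ≤ part l j := by
  by_cases h : j + 1 < l.length
  · have h2 := (List.isChain_iff_getElem.1 hl.1) j (by omega)
    show l.getD (j+1) 0 ≤ l.getD j 0
    rw [List.getD_eq_getElem _ _ h, List.getD_eq_getElem _ _ (by omega : j < l.length)]
    exact h2
  · rw [part_eq_zero (by omega)]; omega

lemma part_le_of_le {l : List ℕ} (hl : IsPartition l) {j j' : ℕ} (h : j ≤ j') :
    part l j' ≤ part l j := by
  induction j' with
  | zero => have : j = 0 := by omega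
            subst this; rfl
  | succ n ih =>
    rcases Nat.lt_or_ge j (n+1) with h'|h'
    · exact le_trans (part_succ_le hl n) (ih (by omega))
    · have : j = n + 1 := by omega
      subst this; rfl

def xorTo (f : ℕ → ℕ) : ℕ → ℕ
  | 0 => 0
  | n + 1 => xorTo f n ^^^ f n

lemma xorTo_congr {f g : ℕ → ℕ} : ∀ {n}, (∀ j < n, f j = g j) → xorTo f n = xorTo g n
  | 0, _ => rfl
  | n + 1, h => by
    rw [xorTo, xorTo, xorTo_congr (fun j hj => h j (by omega)), h n (by omega)]

lemma xorTo_stable {f : ℕ → ℕ} {n : ℕ} (h0 : ∀ j, n ≤ j → f j = 0) :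
    ∀ {m}, n ≤ m → xorTo f m = xorTo f n := by
  intro m
  induction m with
  | zero => intro h
            have : n = 0 := by omega
            rw [this]
  | succ m ih =>
    intro h
    rcases Nat.lt_or_ge m n with h'|h'
    · have : n = m + 1 := by omega
      rw [this]
    · rw [xorTo, h0 m h', Nat.xor_zero, ih h']

lemma xorTo_update {f g : ℕ → ℕ} {k : ℕ} (h : ∀ j ≠ k, g j = f j) :
    ∀ {n}, k < n → xorTo g n = xorTo f n ^^^ (f k ^^^ g k) := by
  intro n
  induction n with
  | zero => omega
  | succ n ih =>
    intro hk
    rcases Nat.lt_or_ge k n with h'|h'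
    · rw [xorTo, ih h', h n (by omega), xorTo]
      simp [Nat.xor_assoc, Nat.xor_comm, xor_left_comm]
    · have hkn : k = n := by omega
      subst hkn
      rw [xorTo, xorTo, xorTo_congr (fun j hj => h j (by omega))]
      rw [Nat.xor_assoc, Nat.xor_xor_cancel_left]

lemma exists_xor {f : ℕ → ℕ} : ∀ {n t : ℕ}, t < xorTo f n →
    ∃ k < n, f k ^^^ (xorTo f n ^^^ t) < f k := by
  intro n
  induction n with
  | zero => intro t ht; simp [xorTo] at ht
  | succ n ih =>
    intro t ht
    rw [xorTo] at ht
    rcases Nat.lt_xor_cases ht with h | h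
    · obtain ⟨k, hk, hlt⟩ := ih h
      refine ⟨k, by omega, ?_⟩
      have he : xorTo f (n+1) ^^^ t = xorTo f n ^^^ (t ^^^ f n) := by
        rw [xorTo]
        simp [Nat.xor_assoc, Nat.xor_comm, xor_left_comm]
      rwa [he]
    · refine ⟨n, by omega, ?_⟩
      have he : f n ^^^ (xorTo f (n+1) ^^^ t) = t ^^^ xorTo f n := by
        rw [xorTo]
        simp [Nat.xor_assoc, Nat.xor_comm, xor_left_comm, Nat.xor_self, Nat.xor_xor_cancel_left]
      rwa [he]

lemma xorTo_le_one {f : ℕ → ℕ} (h : ∀ j, f j ≤ 1) : ∀ n, xorTo f n ≤ 1 := by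
  intro n
  induction n with
  | zero => simp [xorTo]
  | succ n ih =>
    rw [xorTo]
    have := h n
    interval_cases hx : (f n) <;> interval_cases hy : (xorTo f n) <;> simp

lemma rem_eq_zero {l : List ℕ} {j : ℕ} (h : (l.length + 1) / 2 ≤ j) : rem l j = 0 := by
  simp [rem, part_eq_zero (by omega : l.length ≤ 2*j), part_eq_zero (by omega : l.length ≤ 2*j+1)]

lemma foldr_xor (xs : List ℕ) (a : ℕ) :
    xs.foldr (· ^^^ ·) a = xs.foldr (· ^^^ ·) 0 ^^^ a := by
  induction xs with
  | nil => simp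
  | cons x xs ih => simp [ih, Nat.xor_assoc]

lemma foldr_ofFn_xor (f : ℕ → ℕ) : ∀ m,
    (List.ofFn (fun i : Fin m => f i)).foldr (· ^^^ ·) 0 = xorTo f m := by
  intro m
  induction m with
  | zero => rfl
  | succ m ih =>
    rw [List.ofFn_succ', List.concat_eq_append, List.foldr_concat, foldr_xor]
    simp only [Fin.coe_castSucc, Fin.val_last]
    rw [ih, Nat.xor_zero, xorTo]

lemma nimSum_eq_xorTo (l : List ℕ) {n : ℕ} (h : (l.length + 1) / 2 ≤ n) :
    nimSum l = xorTo (rem l) n := by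
  unfold nimSum
  rw [foldr_ofFn_xor, xorTo_stable (fun j hj => rem_eq_zero hj) h]

lemma nimSum_le_one {l : List ℕ} (h : ∀ j, rem l j ≤ 1) : nimSum l ≤ 1 := by
  rw [nimSum_eq_xorTo l (le_refl _)]
  exact xorTo_le_one h _

lemma nimSum_update {l l' : List ℕ} {k : ℕ} (h : ∀ j ≠ k, rem l' j = rem l j) :
    nimSum l' = nimSum l ^^^ (rem l k ^^^ rem l' k) := by
  set N := (l.length + 1) / 2 + (l'.length + 1) / 2 + k + 1 with hN
  rw [nimSum_eq_xorTo l (n := N) (by omega), nimSum_eq_xorTo l' (n := N) (by omega)]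
  exact xorTo_update h (by omega)

lemma mexOf_eq {S : Set ℕ} {s : ℕ} (h1 : s ∉ S) (h2 : ∀ t, t < s → t ∈ S) :
    mexOf S = s := by
  unfold mexOf
  apply le_antisymm
  · exact Nat.sInf_le h1
  · apply le_csInf ⟨s, h1⟩
    intro b hb
    by_contra hc
    exact hb (h2 b (by omega))

lemma part_eq_getElem {l : List ℕ} {j : ℕ} (h : j < l.length) : part l j = l[j] :=
  List.getD_eq_getElem _ _ h

lemma sum_filter_ne_zero (l : List ℕ) : (l.filter (fun x => x ≠ 0)).sum = l.sum := by
  induction l with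
  | nil => rfl
  | cons a l ih =>
    simp only [ne_eq, decide_not] at ih ⊢
    rw [List.filter_cons]
    by_cases h : a = 0 <;> simp [h, ih]

lemma sum_set_add (l : List ℕ) : ∀ i v, i < l.length → (l.set i v).sum + part l i = l.sum + v := by
  induction l with
  | nil => intro i v h; simp at h
  | cons a l ih =>
    intro i v h
    cases i with
    | zero => simp [part]; omega
    | succ i =>
      have := ih i v (by simpa using h)
      simp only [List.set_cons_succ, List.sum_cons]
      have hp : part (a :: l) (i+1) = part l i := by simp [part]
      rw [hp]; omega

lemma chain'_set {l : List ℕ} (hl : IsPartition l) {i v : ℕ} (hi : i < l.length)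
    (h1 : v ≤ part l i) (h2 : part l (i+1) ≤ v) : (l.set i v).Chain' (· ≥ ·) := by
  apply List.isChain_iff_getElem.2
  intro j hj
  simp only [List.length_set] at hj
  simp only [List.get_eq_getElem, List.getElem_set]
  have hj1 : j < l.length := by omega
  have hj2 : j + 1 < l.length := by omega
  by_cases e1 : i = j
  · subst e1
    simp only [if_pos rfl, if_neg (by omega : ¬ i = i + 1)]
    calc l[i+1] = part l (i+1) := (part_eq_getElem hj2).symm
    _ ≤ v := h2
  · rw [if_neg e1]
    by_cases e2 : i = j + 1
    · subst e2
      rw [if_pos rfl]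
      calc v ≤ part l (j+1) := h1
      _ ≤ part l j := part_succ_le hl j
      _ = l[j] := part_eq_getElem hj1
    · rw [if_neg e2]
      exact (List.isChain_iff_getElem.1 hl.1) j (by omega)

lemma move_core {l : List ℕ} (hl : IsPartition l) {i v : ℕ} (hi : i < l.length)
    (hv : v < part l i) (hc : (l.set i v).Chain' (· ≥ ·)) :
    IsPartition ((l.set i v).filter (fun x => x ≠ 0)) ∧
    (∀ j, part ((l.set i v).filter (fun x => x ≠ 0)) j = if j = i then v else part l j) ∧
    ((l.set i v).filter (fun x => x ≠ 0)).sum < l.sum := by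
  set l' := (l.set i v).filter (fun x => x ≠ 0) with hl'
  have hpart : IsPartition l' := by
    constructor
    · exact hc.sublist List.filter_sublist
    · intro x hx
      rw [hl', List.mem_filter] at hx
      have := hx.2
      simp only [ne_eq, decide_not, Bool.not_eq_true', decide_eq_false_iff_not] at this
      omega
  have hsum : l'.sum < l.sum := by
    have h1 : l'.sum = (l.set i v).sum := by rw [hl']; exact sum_filter_ne_zero _
    have h2 := sum_set_add l i v hi
    omega
  refine ⟨hpart, ?_, hsum⟩
  intro j
  by_cases hv0 : v = 0
  · -- i is the last index
    subst hv0
    have hlast : i + 1 = l.length := by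
      by_contra hne
      have hi1 : i + 1 < l.length := by omega
      have h3 := (List.isChain_iff_getElem.1 hc) i (by simp; omega)
      simp only [List.get_eq_getElem, List.getElem_set] at h3
      rw [if_pos trivial, if_neg (by omega : ¬ i = i + 1)] at h3
      have hpos : 0 < l[i+1] := by
        have h4 := part_pos hl hi1
        rwa [part_eq_getElem hi1] at h4
      omega
    have hset : l.set i 0 = l.take i ++ [0] := by
      rw [List.set_eq_take_append_cons_drop, if_pos hi, List.drop_eq_nil_of_le (by omega)]
    have hfil : l' = l.take i := by
      rw [hl', hset, List.filter_append]
      have hts : (l.take i).filter (fun x => x ≠ 0) = l.take i := by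
        rw [List.filter_eq_self]
        intro a ha
        have hmem : a ∈ l := List.mem_of_mem_take ha
        have hpos := hl.2 a hmem
        have : a ≠ 0 := by omega
        simpa using this
      rw [hts]
      simp
    rw [hfil]
    have hlen : (l.take i).length = i := by
      rw [List.length_take]; omega
    by_cases hji : j = i
    · subst hji
      rw [if_pos rfl, part_eq_zero (by omega)]
    · rw [if_neg hji]
      by_cases hjlt : j < i
      · rw [part_eq_getElem (by omega), part_eq_getElem (by omega : j < l.length),
          List.getElem_take]
      · rw [part_eq_zero (by omega), part_eq_zero (by omega)]
  · -- no zeros at all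
    have hfil : l' = l.set i v := by
      rw [hl', List.filter_eq_self]
      intro a ha
      rw [List.mem_iff_getElem] at ha
      obtain ⟨n, hn, he⟩ := ha
      rw [List.getElem_set] at he
      simp only [List.length_set] at hn
      by_cases hni : i = n
      · simp only [if_pos hni] at he; simp; omega
      · rw [if_neg hni] at he
        have := part_pos hl (j := n) hn
        rw [part_eq_getElem hn] at this
        simp; omega
    rw [hfil]
    by_cases hji : j = i
    · subst hji
      rw [if_pos rfl, part_eq_getElem (by simpa using hi), List.getElem_set, if_pos rfl]
    · rw [if_neg hji]
      by_cases hjl : j < l.length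
      · rw [part_eq_getElem (by simpa using hjl), List.getElem_set, if_neg (by omega),
          part_eq_getElem hjl]
      · rw [part_eq_zero (by simpa using hjl), part_eq_zero (by omega)]

lemma next_le_of_chain {l : List ℕ} (hl : IsPartition l) {i v : ℕ} (hi : i < l.length)
    (hc : (l.set i v).Chain' (· ≥ ·)) : part l (i + 1) ≤ v := by
  by_cases h : i + 1 < l.length
  · have := (List.isChain_iff_getElem.1 hc) i (by simp; omega)
    simp only [List.get_eq_getElem, List.getElem_set, if_pos rfl,
      if_neg (by omega : ¬ i = i + 1)] at this
    rwa [part_eq_getElem h]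
  · rw [part_eq_zero (by omega)]; omega

lemma move_spec {l l' : List ℕ} (hl : IsPartition l) (h : RitMove l l') :
    IsPartition l' ∧ l'.sum < l.sum ∧ ∃ k,
      (∀ j, j ≠ k → rem l' j = rem l j) ∧ rem l' k ≠ rem l k ∧
      nimSum l' = nimSum l ^^^ (rem l k ^^^ rem l' k) := by
  obtain ⟨i, v, hi, hv, hc, he⟩ := h
  subst he
  obtain ⟨hp, hparts, hsum⟩ := move_core hl hi hv hc
  have hnext : part l (i+1) ≤ v := next_le_of_chain hl hi hc
  refine ⟨hp, hsum, i / 2, ?_, ?_, ?_⟩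
  · intro j hj
    have h1 : 2 * j ≠ i := by omega
    have h2 : 2 * j + 1 ≠ i := by omega
    simp only [rem, hparts, if_neg h1, if_neg h2]
  · have h2k : 2 * (i / 2) = i ∨ 2 * (i / 2) + 1 = i := by omega
    rcases h2k with h2k | h2k
    · -- i even
      have e1 : rem ((l.set i v).filter (fun x => x ≠ 0)) (i/2) = v - part l (i+1) := by
        unfold rem
        rw [hparts, hparts, if_pos h2k, if_neg (by omega : ¬ (2*(i/2)+1 = i))]
        rw [show 2*(i/2)+1 = i+1 by omega]
      have e2 : rem l (i/2) = part l i - part l (i+1) := by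
        unfold rem
        rw [show 2*(i/2) = i by omega, show i+1 = i+1 from rfl]
      rw [e1, e2]; omega
    · -- i odd
      have hprev : part l i ≤ part l (2 * (i/2)) := by
        have h5 := part_succ_le hl (2 * (i/2))
        rwa [show 2*(i/2)+1 = i by omega] at h5
      have e1 : rem ((l.set i v).filter (fun x => x ≠ 0)) (i/2) = part l (2*(i/2)) - v := by
        unfold rem
        rw [hparts, hparts, if_neg (by omega : ¬ (2*(i/2) = i)), if_pos h2k]
      have e2 : rem l (i/2) = part l (2*(i/2)) - part l i := by
        unfold rem
        rw [show 2*(i/2)+1 = i by omega]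
      have hvp : v < part l i := hv
      rw [e1, e2]
      omega
  · apply nimSum_update
    intro j hj
    have h1 : 2 * j ≠ i := by omega
    have h2 : 2 * j + 1 ≠ i := by omega
    simp only [rem, hparts, if_neg h1, if_neg h2]

lemma move_make {l : List ℕ} (hl : IsPartition l) {k r' : ℕ} (h : r' < rem l k) :
    ∃ l', RitMove l l' ∧ IsPartition l' ∧ l'.sum < l.sum ∧
      (∀ j, j ≠ k → rem l' j = rem l j) ∧ rem l' k = r' ∧
      nimSum l' = nimSum l ^^^ (rem l k ^^^ r') := by
  have hrem : rem l k = part l (2*k) - part l (2*k+1) := rfl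
  have hle : part l (2*k+1) ≤ part l (2*k) := part_succ_le hl (2*k)
  have hpos : 0 < part l (2*k) := by omega
  have hi : 2*k < l.length := part_lt_length hpos
  set v := part l (2*k+1) + r' with hv
  have hvlt : v < part l (2*k) := by omega
  have hc : (l.set (2*k) v).Chain' (· ≥ ·) :=
    chain'_set hl hi (by omega) (by omega)
  obtain ⟨hp, hparts, hsum⟩ := move_core hl hi hvlt hc
  set l' := (l.set (2*k) v).filter (fun x => x ≠ 0) with hl'
  have hremj : ∀ j, j ≠ k → rem l' j = rem l j := by
    intro j hj
    have h1 : 2 * j ≠ 2*k := by omega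
    have h2 : 2 * j + 1 ≠ 2*k := by omega
    simp only [rem, hparts, if_neg h1, if_neg h2]
  have hremk : rem l' k = r' := by
    unfold rem
    rw [hparts, hparts, if_pos rfl, if_neg (by omega : ¬ (2*k+1 = 2*k))]
    omega
  refine ⟨l', ⟨2*k, v, hi, hvlt, hc, rfl⟩, hp, hsum, hremj, hremk, ?_⟩
  rw [← hremk]
  exact nimSum_update hremj

lemma move_make_inc {l : List ℕ} (hl : IsPartition l) (hne : l ≠ [])
    (hall : ∀ j, rem l j = 0) :
    ∃ l' k, RitMove l l' ∧ IsPartition l' ∧ l'.sum < l.sum ∧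
      (∀ j, j ≠ k → rem l' j = rem l j) ∧ rem l' k = 1 ∧
      nimSum l' = nimSum l ^^^ 1 := by
  have hlen : 0 < l.length := List.length_pos_iff.2 hne
  have heven : l.length % 2 = 0 := by
    by_contra hodd
    set m := l.length / 2 with hm
    have h2m : 2*m < l.length := by omega
    have := part_pos hl h2m
    have h0 := hall m
    have := part_eq_zero (l := l) (j := 2*m+1) (by omega)
    rw [show rem l m = part l (2*m) - part l (2*m+1) from rfl] at h0
    omega
  set m := l.length / 2 with hm
  have hmpos : 0 < m := by omega
  set i := 2*m - 1 with hi'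
  have hi : i < l.length := by omega
  have hodd : 2 * (m-1) + 1 = i := by omega
  have hppos : 0 < part l i := part_pos hl hi
  set v := part l i - 1 with hv
  have hvlt : v < part l i := by omega
  have hc : (l.set i v).Chain' (· ≥ ·) := by
    apply chain'_set hl hi (by omega)
    rw [part_eq_zero (by omega : l.length ≤ i + 1)]
    omega
  obtain ⟨hp, hparts, hsum⟩ := move_core hl hi hvlt hc
  set l' := (l.set i v).filter (fun x => x ≠ 0) with hl'
  set k := m - 1 with hk
  have hremj : ∀ j, j ≠ k → rem l' j = rem l j := by
    intro j hj
    have h1 : 2 * j ≠ i := by omega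
    have h2 : 2 * j + 1 ≠ i := by omega
    simp only [rem, hparts, if_neg h1, if_neg h2]
  have hprev : part l i ≤ part l (2*k) := by
    have h5 := part_succ_le hl (2*k)
    rwa [show 2*k+1 = i by omega] at h5
  have hzero := hall k
  rw [show rem l k = part l (2*k) - part l (2*k+1) from rfl,
    show 2*k+1 = i by omega] at hzero
  have hremk : rem l' k = 1 := by
    unfold rem
    rw [hparts, hparts, if_neg (by omega : ¬ (2*k = i)), if_pos (by omega : 2*k+1 = i)]
    omega
  refine ⟨l', k, ⟨i, v, hi, hvlt, hc, rfl⟩, hp, hsum, hremj, hremk, ?_⟩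
  have := nimSum_update (l := l) (l' := l') (k := k) hremj
  rw [this, hremk, hall k, Nat.zero_xor]

lemma xor_eq_self {a b : ℕ} (h : a ^^^ b = a) : b = 0 := by
  have := congrArg (fun x => a ^^^ x) h
  simpa [Nat.xor_xor_cancel_left, Nat.xor_self] using this

lemma xor_calc (s r t : ℕ) : s ^^^ (r ^^^ (r ^^^ (s ^^^ t) ^^^ 1)) ^^^ 1 = t := by
  simp [Nat.xor_assoc, Nat.xor_comm, xor_left_comm, Nat.xor_self, Nat.xor_zero,
    Nat.zero_xor, Nat.xor_xor_cancel_left, Nat.xor_xor_cancel_right]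

attribute [local instance] Classical.propDecidable

lemma xor_right_cancel {a b c : ℕ} (h : a ^^^ c = b ^^^ c) : a = b := by
  have := congrArg (fun x => x ^^^ c) h
  simpa [Nat.xor_assoc] using this

theorem G_char {G : List ℕ → ℕ} (hG : IsRitGrundy G) :
    ∀ l, IsPartition l → G l = nimSum l := by
  suffices H : ∀ n l, IsPartition l → l.sum = n → G l = nimSum l by
    intro l hl; exact H l.sum l hl rfl
  intro n
  induction n using Nat.strong_induction_on with
  | _ n IH =>
  intro l hl hsum
  subst hsum
  rw [hG l hl]
  apply mexOf_eq
  · rintro ⟨l', hm, hGl'⟩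
    obtain ⟨hp', hs', k, hj, hk, hns⟩ := move_spec hl hm
    rw [IH l'.sum hs' l' hp' rfl] at hGl'
    rw [hns] at hGl'
    exact hk (Nat.xor_eq_zero_iff.1 (xor_eq_self hGl')).symm
  · intro t ht
    rw [nimSum_eq_xorTo l (le_refl ((l.length + 1) / 2))] at ht
    obtain ⟨k, hkN, hlt⟩ := exists_xor ht
    rw [← nimSum_eq_xorTo l (le_refl ((l.length + 1) / 2))] at hlt
    obtain ⟨l', hm, hp', hs', hj, hrk, hns⟩ := move_make hl hlt
    refine ⟨l', hm, ?_⟩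
    rw [IH l'.sum hs' l' hp' rfl, hns, Nat.xor_xor_cancel_left, Nat.xor_xor_cancel_left]

theorem Gm_char {Gm : List ℕ → ℕ} (hGm : IsRitMisereGrundy Gm) :
    ∀ l, IsPartition l →
      Gm l = if ∀ j, rem l j ≤ 1 then nimSum l ^^^ 1 else nimSum l := by
  suffices H : ∀ n l, IsPartition l → l.sum = n →
      Gm l = if ∀ j, rem l j ≤ 1 then nimSum l ^^^ 1 else nimSum l by
    intro l hl; exact H l.sum l hl rfl
  intro n
  induction n using Nat.strong_induction_on with
  | _ n IH =>
  intro l hl hsum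
  subst hsum
  by_cases hne : l = []
  · subst hne
    have h1 : ∀ j, rem ([] : List ℕ) j ≤ 1 := by intro j; simp [rem, part]
    rw [if_pos h1]
    have h2 : nimSum ([] : List ℕ) = 0 := rfl
    rw [h2, hGm.1]
    simp
  · rw [hGm.2 l hl hne]
    by_cases hSmall : ∀ j, rem l j ≤ 1
    · rw [if_pos hSmall]
      have hs1 : nimSum l ≤ 1 := nimSum_le_one hSmall
      apply mexOf_eq
      · -- nimSum l ^^^ 1 is not a child value
        rintro ⟨l', hm, hGl'⟩
        obtain ⟨hp', hs', k, hj, hk, hns⟩ := move_spec hl hm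
        rw [IH l'.sum hs' l' hp' rfl] at hGl'
        by_cases hS' : ∀ j, rem l' j ≤ 1
        · rw [if_pos hS'] at hGl'
          have : nimSum l' = nimSum l := xor_right_cancel hGl'
          rw [hns] at this
          exact hk (Nat.xor_eq_zero_iff.1 (xor_eq_self this)).symm
        · rw [if_neg hS'] at hGl'
          -- nimSum l' = nimSum l ^^^ 1, some rem l' ≥ 2, it must be at k
          push_neg at hS'
          obtain ⟨j0, hj0⟩ := hS'
          have hj0k : j0 = k := by
            by_contra hc
            have h7 := hSmall j0
            rw [← hj j0 hc] at h7
            omega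
          rw [hj0k] at hj0
          rw [hns] at hGl'
          have hxr : rem l k ^^^ rem l' k = 1 := by
            have h5 := congrArg (fun x => nimSum l ^^^ x) hGl'
            simpa [Nat.xor_xor_cancel_left] using h5
          have : rem l' k = rem l k ^^^ 1 := by
            have := congrArg (fun x => rem l k ^^^ x) hxr
            simpa [Nat.xor_xor_cancel_left] using this
          have hrk1 : rem l k ≤ 1 := hSmall k
          rcases Nat.le_one_iff_eq_zero_or_eq_one.1 hrk1 with h|h <;>
            rw [h] at this <;> simp at this <;> omega
      · -- every t < nimSum l ^^^ 1 is a child value (only relevant: s = 0, t = 0)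
        intro t ht
        rcases Nat.le_one_iff_eq_zero_or_eq_one.1 hs1 with hs|hs
        · rw [hs, Nat.zero_xor] at ht
          have ht0 : t = 0 := by omega
          subst ht0
          by_cases hA : ∃ k, rem l k = 1
          · obtain ⟨k, hk1⟩ := hA
            obtain ⟨l', hm, hp', hs', hj, hrk, hns⟩ :=
              move_make hl (show 0 < rem l k by omega)
            refine ⟨l', hm, ?_⟩
            rw [IH l'.sum hs' l' hp' rfl, if_pos ?side]
            · rw [hns, hs, hk1]; decide
            case side =>
              intro j
              by_cases hjk : j = k
              · rw [hjk, hrk]; omega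
              · rw [hj j hjk]; exact hSmall j
          · push_neg at hA
            have hall : ∀ j, rem l j = 0 := by
              intro j; have := hSmall j; have := hA j; omega
            obtain ⟨l', k, hm, hp', hs', hj, hrk, hns⟩ := move_make_inc hl hne hall
            refine ⟨l', hm, ?_⟩
            rw [IH l'.sum hs' l' hp' rfl, if_pos ?side2]
            · rw [hns, hs]; decide
            case side2 =>
              intro j
              by_cases hjk : j = k
              · rw [hjk, hrk]
              · rw [hj j hjk]; exact hSmall j
        · rw [hs] at ht; simp at ht
    · rw [if_neg hSmall]
      push_neg at hSmall
      obtain ⟨j0, hj0⟩ := hSmall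
      apply mexOf_eq
      · rintro ⟨l', hm, hGl'⟩
        obtain ⟨hp', hs', k, hj, hk, hns⟩ := move_spec hl hm
        rw [IH l'.sum hs' l' hp' rfl] at hGl'
        by_cases hS' : ∀ j, rem l' j ≤ 1
        · rw [if_pos hS'] at hGl'
          have hj0k : j0 = k := by
            by_contra hc
            have := hS' j0
            rw [hj j0 hc] at this
            omega
          rw [hj0k] at hj0
          rw [hns] at hGl'
          -- (s ^^^ (r ^^^ r')) ^^^ 1 = s  →  r ^^^ r' = 1
          have hxr : rem l k ^^^ rem l' k = 1 := by
            have h5 : nimSum l ^^^ ((rem l k ^^^ rem l' k) ^^^ 1) = nimSum l ^^^ 0 := by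
              rw [Nat.xor_zero, ← Nat.xor_assoc]
              exact hGl'
            have h6 := xor_eq_self (b := (rem l k ^^^ rem l' k) ^^^ 1)
              (by rw [h5, Nat.xor_zero])
            have := congrArg (fun x => x ^^^ 1) h6
            simpa [Nat.xor_assoc] using this
          have hr' : rem l' k ≤ 1 := hS' k
          have : rem l k = 1 ^^^ rem l' k := by
            have := congrArg (fun x => x ^^^ rem l' k) hxr
            simpa [Nat.xor_assoc] using this
          rcases Nat.le_one_iff_eq_zero_or_eq_one.1 hr' with h|h <;>
            rw [h] at this <;> simp at this <;> omega
        · rw [if_neg hS'] at hGl'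
          rw [hns] at hGl'
          exact hk (Nat.xor_eq_zero_iff.1 (xor_eq_self hGl')).symm
      · intro t ht
        rw [nimSum_eq_xorTo l (le_refl ((l.length + 1) / 2))] at ht
        obtain ⟨k, hkN, hlt⟩ := exists_xor ht
        rw [← nimSum_eq_xorTo l (le_refl ((l.length + 1) / 2))] at hlt
        obtain ⟨l', hm, hp', hs', hj, hrk, hns⟩ := move_make hl hlt
        have hnst : nimSum l' = t := by
          rw [hns, Nat.xor_xor_cancel_left, Nat.xor_xor_cancel_left]
        by_cases hS' : ∀ j, rem l' j ≤ 1
        · -- adjusted move: flip last bit of the new value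
          have hj0k : j0 = k := by
            by_contra hc
            have := hS' j0
            rw [hj j0 hc] at this
            omega
          rw [hj0k] at hj0
          have hr' : rem l' k ≤ 1 := hS' k
          have hr'' : rem l k ^^^ (nimSum l ^^^ t) ^^^ 1 ≤ 1 := by
            rw [← hrk]
            rcases Nat.le_one_iff_eq_zero_or_eq_one.1 hr' with h|h <;> rw [h] <;> simp
          have hlt2 : rem l k ^^^ (nimSum l ^^^ t) ^^^ 1 < rem l k := by
            have h9 : 1 < rem l k := hj0
            omega
          obtain ⟨l'', hm2, hp2, hs2, hj2, hrk2, hns2⟩ := move_make hl hlt2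
          refine ⟨l'', hm2, ?_⟩
          rw [IH l''.sum hs2 l'' hp2 rfl, if_pos ?side3]
          · rw [hns2]
            -- s ^^^ (r ^^^ (r ^^^ (s ^^^ t) ^^^ 1)) ^^^ 1 = t
            exact xor_calc _ _ _
          case side3 =>
            intro j
            by_cases hjk : j = k
            · rw [hjk, hrk2]; omega
            · rw [hj2 j hjk, ← hj j hjk]; exact hS' j
        · refine ⟨l', hm, ?_⟩
          rw [IH l'.sum hs' l' hp' rfl, if_neg hS', hnst]

/-- RIT is miserable. -/
theorem stmt_14 (G Gm : List ℕ → ℕ) (hG : IsRitGrundy G)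
    (hGm : IsRitMisereGrundy Gm) (x : List ℕ) (hx : IsPartition x) :
    ((G x = 0 ∧ Gm x = 1) ∨ (G x = 1 ∧ Gm x = 0)) ∨
    (∀ y, RitMove x y → ¬ ((G y = 0 ∧ Gm y = 1) ∨ (G y = 1 ∧ Gm y = 0))) ∨
    ((∃ y, RitMove x y ∧ G y = 0 ∧ Gm y = 1) ∧
      (∃ y, RitMove x y ∧ G y = 1 ∧ Gm y = 0)) := by
  have hGc := G_char hG
  have hGmc := Gm_char hGm
  by_cases hS : ∀ j, rem x j ≤ 1
  · left
    have hgx : G x = nimSum x := hGc x hx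
    have hgm : Gm x = nimSum x ^^^ 1 := by rw [hGmc x hx, if_pos hS]
    rcases Nat.le_one_iff_eq_zero_or_eq_one.1 (nimSum_le_one hS) with h|h
    · left; rw [hgx, hgm, h]; exact ⟨rfl, rfl⟩
    · right; rw [hgx, hgm, h]; exact ⟨rfl, rfl⟩
  · push_neg at hS
    obtain ⟨k0, hk0⟩ := hS
    by_cases hU : ∀ j, j ≠ k0 → rem x j ≤ 1
    · right; right
      obtain ⟨y0, hm0, hp0, hs0, hj0, hr0, hn0⟩ :=
        move_make hx (show 0 < rem x k0 by omega)
      obtain ⟨y1, hm1, hp1, hs1, hj1, hr1, hn1⟩ :=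
        move_make hx (show 1 < rem x k0 from hk0)
      have hS0 : ∀ j, rem y0 j ≤ 1 := by
        intro j
        by_cases hjk : j = k0
        · rw [hjk, hr0]; omega
        · rw [hj0 j hjk]; exact hU j hjk
      have hS1 : ∀ j, rem y1 j ≤ 1 := by
        intro j
        by_cases hjk : j = k0
        · rw [hjk, hr1]
        · rw [hj1 j hjk]; exact hU j hjk
      have hg0 : G y0 = nimSum x ^^^ (rem x k0 ^^^ 0) := by rw [hGc y0 hp0, hn0]
      have hg1 : G y1 = nimSum x ^^^ (rem x k0 ^^^ 1) := by rw [hGc y1 hp1, hn1]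
      have hgm0 : Gm y0 = G y0 ^^^ 1 := by
        rw [hGmc y0 hp0, if_pos hS0, hGc y0 hp0]
      have hgm1 : Gm y1 = G y1 ^^^ 1 := by
        rw [hGmc y1 hp1, if_pos hS1, hGc y1 hp1]
      have hle0 : G y0 ≤ 1 := by rw [hGc y0 hp0]; exact nimSum_le_one hS0
      have hle1 : G y1 ≤ 1 := by rw [hGc y1 hp1]; exact nimSum_le_one hS1
      have hdiff : G y1 = G y0 ^^^ 1 := by
        rw [hg0, hg1, Nat.xor_zero]
        exact (Nat.xor_assoc _ _ _).symm
      rcases Nat.le_one_iff_eq_zero_or_eq_one.1 hle0 with h|h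
      · exact ⟨⟨y0, hm0, h, by rw [hgm0, h]; decide⟩,
          ⟨y1, hm1, by rw [hdiff, h]; decide, by rw [hgm1, hdiff, h]; decide⟩⟩
      · exact ⟨⟨y1, hm1, by rw [hdiff, h]; decide, by rw [hgm1, hdiff, h]; decide⟩,
          ⟨y0, hm0, h, by rw [hgm0, h]; decide⟩⟩
    · right; left
      push_neg at hU
      obtain ⟨k1, hk1ne, hk1⟩ := hU
      intro y hmove hcon
      obtain ⟨hp', hs', k, hj, hk, hns⟩ := move_spec hx hmove
      have hyS : ¬ ∀ j, rem y j ≤ 1 := by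
        intro hall
        by_cases hkk : k = k0
        · have h7 := hall k1
          rw [hj k1 (by omega)] at h7
          omega
        · have h7 := hall k0
          rw [hj k0 (by omega)] at h7
          omega
      have hy1 : G y = nimSum y := hGc y hp'
      have hy2 : Gm y = nimSum y := by rw [hGmc y hp', if_neg hyS]
      rcases hcon with ⟨h1, h2⟩ | ⟨h1, h2⟩ <;> omega
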